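/- Let C be a braided monoidal category, A a symmetric monoidal subcategory of C, and for objects c, c' of C suppose the functor a ↦ Hom_C(a ⊗ c, c') from A^op to vector spaces is representable by an object Hom_underline(c,c') of A. Then composition maps Hom_underline(c',c'') ⊗ Hom_underline(c,c') → Hom_underline(c,c''), defined via the representing property, the evaluation ev : Hom_underline(c',c'') ⊗ c' → c'', and duality in A, make the objects of C into a category enriched over A. -/

import Mathlib

open CategoryTheory MonoidalCategory Functor.LaxMonoidal Functor.OplaxMonoidal

section Aux
variable {A C : Type*} [Category A] [Category C]
    [MonoidalCategory A] [MonoidalCategory C]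
    (ι : A ⥤ C) [ι.Monoidal]
    (H : C → C → A)
    (φ : ∀ (a : A) (c c' : C), (a ⟶ H c c') ≃ (ι.obj a ⊗ c ⟶ c'))

/-- evaluation -/
def myEv (c c' : C) : ι.obj (H c c') ⊗ c ⟶ c' := φ (H c c') c c' (𝟙 _)

/-- composition -/
def myComp (c c' c'' : C) : (H c' c'' ⊗ H c c' : A) ⟶ H c c'' :=
  (φ _ c c'').symm ((δ ι _ _ ▷ c) ≫ (α_ _ _ c).hom ≫
    (ι.obj (H c' c'') ◁ myEv ι H φ c c') ≫ myEv ι H φ c' c'')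

/-- identity -/
def myEid (c : C) : 𝟙_ A ⟶ H c c := (φ _ c c).symm ((η ι ▷ c) ≫ (λ_ c).hom)

variable (φnat : ∀ {a a' : A} (h : a' ⟶ a) {c c' : C} (f : a ⟶ H c c'),
      φ a' c c' (h ≫ f) = (ι.map h ▷ c) ≫ φ a c c' f)

include φnat

lemma phi_apply {a : A} {c c' : C} (f : a ⟶ H c c') :
    φ a c c' f = (ι.map f ▷ c) ≫ myEv ι H φ c c' := by
  simpa [myEv] using φnat f (𝟙 _)

lemma comp_key (a a' : A) (c c' c'' : C) (f : a ⟶ H c c') (g : a' ⟶ H c' c'') :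
    φ (a' ⊗ a) c c'' ((g ⊗ₘ f) ≫ myComp ι H φ c c' c'') =
      (δ ι a' a ▷ c) ≫ (α_ (ι.obj a') (ι.obj a) c).hom ≫
        (ι.obj a' ◁ φ a c c' f) ≫ φ a' c' c'' g := by
  rw [φnat, myComp, Equiv.apply_symm_apply, phi_apply ι H φ φnat f,
    phi_apply ι H φ φnat g]
  rw [← comp_whiskerRight_assoc, ← δ_natural, comp_whiskerRight_assoc]
  simp only [MonoidalCategory.tensorHom_def, comp_whiskerRight, Category.assoc,
    MonoidalCategory.whiskerLeft_comp]
  rw [associator_naturality_middle_assoc, associator_naturality_left_assoc]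
  simp only [whisker_exchange_assoc, whisker_exchange]

end Aux

/-- Let `C` be a braided monoidal category containing a symmetric monoidal
category `A` via a braided monoidal functor `ι`, and suppose that for all objects `c, c'` of
`C` the functor `a ↦ Hom_C(ι a ⊗ c, c')` is representable by an object `H c c'` of `A`
(witnessed by the natural family of bijections `φ`).  Then there are composition morphisms
`H c' c'' ⊗ H c c' ⟶ H c c''` and identities `𝟙_A ⟶ H c c`, defined via the representing
property and evaluation, which make the objects of `C` into a category enriched over `A`. -/
theorem enriched_over_symmetric_subcategory
    {A C : Type*} [Category A] [Category C]
    [MonoidalCategory A] [MonoidalCategory C]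
    [SymmetricCategory A] [BraidedCategory C]
    (ι : A ⥤ C) [ι.Braided]
    (H : C → C → A)
    (φ : ∀ (a : A) (c c' : C), (a ⟶ H c c') ≃ (ι.obj a ⊗ c ⟶ c'))
    (φnat : ∀ {a a' : A} (h : a' ⟶ a) {c c' : C} (f : a ⟶ H c c'),
      φ a' c c' (h ≫ f) = (ι.map h ▷ c) ≫ φ a c c' f) :
    ∃ (comp : ∀ c c' c'' : C, ((H c' c'' ⊗ H c c' : A) ⟶ H c c''))
      (eid : ∀ c : C, (𝟙_ A ⟶ H c c)),
      -- the composition is defined via the representing property and evaluation: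
      (∀ (a a' : A) (c c' c'' : C) (f : a ⟶ H c c') (g : a' ⟶ H c' c''),
        φ (a' ⊗ a) c c'' ((g ⊗ₘ f) ≫ comp c c' c'') =
          (δ ι a' a ▷ c) ≫ (α_ (ι.obj a') (ι.obj a) c).hom ≫
            (ι.obj a' ◁ φ a c c' f) ≫ φ a' c' c'' g) ∧
      -- the identity is the mate of the unitor:
      (∀ c : C, φ (𝟙_ A) c c (eid c) = (η ι ▷ c) ≫ (λ_ c).hom) ∧
      -- left and right unit laws of the `A`-enriched category:
      (∀ c c' : C,
        (λ_ (H c c')).inv ≫ (eid c' ▷ H c c') ≫ comp c c' c' = 𝟙 (H c c')) ∧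
      (∀ c c' : C,
        (ρ_ (H c c')).inv ≫ (H c c' ◁ eid c) ≫ comp c c c' = 𝟙 (H c c')) ∧
      -- associativity of the `A`-enriched composition:
      (∀ c c' c'' c''' : C,
        (α_ (H c'' c''') (H c' c'') (H c c')).inv ≫
            (comp c' c'' c''' ▷ H c c') ≫ comp c c' c''' =
          (H c'' c''' ◁ comp c c' c'') ≫ comp c c'' c''') := by
  refine ⟨myComp ι H φ, myEid ι H φ, comp_key ι H φ φnat, ?_, ?_, ?_, ?_⟩
  · intro c
    simp [myEid]
  · -- left unit
    intro c c'
    apply (φ (H c c') c c').injective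
    have key := comp_key ι H φ φnat (H c c') (𝟙_ A) c c' c' (𝟙 _) (myEid ι H φ c')
    rw [tensorHom_id] at key
    rw [φnat, key]
    have heid : φ (𝟙_ A) c' c' (myEid ι H φ c') = (η ι ▷ c') ≫ (λ_ c').hom := by
      simp [myEid]
    have hev : φ (H c c') c c' (𝟙 _) = myEv ι H φ c c' := rfl
    rw [heid, hev]
    rw [whisker_exchange_assoc, ← associator_naturality_left_assoc,
      leftUnitor_naturality]
    rw [← comp_whiskerRight_assoc, ← comp_whiskerRight_assoc]
    simp only [Category.assoc]
    rw [← Functor.OplaxMonoidal.left_unitality]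
    simp [leftUnitor_tensor_hom, ← comp_whiskerRight_assoc, ← comp_whiskerRight]
  · -- right unit
    intro c c'
    apply (φ (H c c') c c').injective
    have key := comp_key ι H φ φnat (𝟙_ A) (H c c') c c c' (myEid ι H φ c) (𝟙 _)
    rw [id_tensorHom] at key
    rw [φnat, key]
    have heid : φ (𝟙_ A) c c (myEid ι H φ c) = (η ι ▷ c) ≫ (λ_ c).hom := by
      simp [myEid]
    have hev : φ (H c c') c c' (𝟙 _) = myEv ι H φ c c' := rfl
    rw [heid, hev]
    simp only [MonoidalCategory.whiskerLeft_comp, Category.assoc]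
    rw [← associator_naturality_middle_assoc, MonoidalCategory.triangle_assoc]
    rw [← comp_whiskerRight_assoc, ← comp_whiskerRight_assoc]
    simp only [Category.assoc]
    rw [← Functor.OplaxMonoidal.right_unitality]
    simp [← comp_whiskerRight_assoc, ← comp_whiskerRight,
      ← MonoidalCategory.whiskerLeft_comp_assoc, ← MonoidalCategory.whiskerLeft_comp]
  · -- associativity
    intro c c' c'' c'''
    apply (φ (H c'' c''' ⊗ (H c' c'' ⊗ H c c')) c c''').injective
    have key1 := comp_key ι H φ φnat (H c c') (H c'' c''' ⊗ H c' c'') c c' c'''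
      (𝟙 _) (myComp ι H φ c' c'' c''')
    rw [tensorHom_id] at key1
    have key2 := comp_key ι H φ φnat (H c' c'' ⊗ H c c') (H c'' c''') c c'' c'''
      (myComp ι H φ c c' c'') (𝟙 _)
    rw [id_tensorHom] at key2
    rw [φnat, key1, key2]
    have hc1 : φ (H c'' c''' ⊗ H c' c'') c' c''' (myComp ι H φ c' c'' c''') =
        (δ ι _ _ ▷ c') ≫ (α_ _ _ c').hom ≫
          (ι.obj (H c'' c''') ◁ myEv ι H φ c' c'') ≫ myEv ι H φ c'' c''' := by
      simp [myComp]
    have hc2 : φ (H c' c'' ⊗ H c c') c c'' (myComp ι H φ c c' c'') =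
        (δ ι _ _ ▷ c) ≫ (α_ _ _ c).hom ≫
          (ι.obj (H c' c'') ◁ myEv ι H φ c c') ≫ myEv ι H φ c' c'' := by
      simp [myComp]
    have hev : ∀ x y : C, φ (H x y) x y (𝟙 _) = myEv ι H φ x y := fun _ _ => rfl
    rw [hc1, hc2]
    simp only [hev]
    simp only [MonoidalCategory.whiskerLeft_comp, Category.assoc]
    rw [whisker_exchange_assoc, ← associator_naturality_left_assoc,
      associator_naturality_right_assoc, ← pentagon_assoc]
    rw [← comp_whiskerRight_assoc, ← comp_whiskerRight_assoc,
      ← comp_whiskerRight_assoc]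
    simp only [Category.assoc]
    rw [Functor.OplaxMonoidal.associativity]
    simp only [← Functor.map_comp_assoc, Iso.inv_hom_id, Functor.map_id,
      Category.id_comp, comp_whiskerRight, Category.assoc]
    rw [associator_naturality_middle_assoc]
    simp
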